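/- For every ℓ ≥ 1 and t ≥ 0, the ℓ-th time derivative of v_{ℓ,0} equals the explicit profile v_ℓ, i.e. (d/dt)^ℓ v_{ℓ,0}(t) = Σ_{j=0}^{ℓ} binom(2ℓ, ℓ+j) ((−t)^j / j!) A^{ℓ+j} e^{−tA}(u0 + u1) − Σ_{k=0}^{ℓ−1} binom(2ℓ−1, ℓ+k) ((−t)^k / k!) A^{ℓ+k} e^{−tA} u0. -/

import Mathlib

open scoped RealInnerProductSpace

universe u

/-- The auxiliary profiles `v_{ℓ,0}(t)` from Section 2.2.1. -/
noncomputable def vl0 {H : Type u} [NormedAddCommGroup H] [InnerProductSpace ℝ H]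
    [CompleteSpace H] (A : H →L[ℝ] H) (u0 u1 : H) (ℓ : ℕ) (t : ℝ) : H :=
  ((-1 : ℝ) ^ ℓ) •
    ((∑ j ∈ Finset.range (ℓ + 1),
        ((ℓ.choose j : ℝ) * ((-t) ^ j / (Nat.factorial j : ℝ))) •
          ((A ^ j) (NormedSpace.exp ((-t) • A) (u0 + u1))))
      - ∑ j ∈ Finset.range ℓ,
          (((ℓ - 1).choose j : ℝ) * ((-t) ^ j / (Nat.factorial j : ℝ))) •
            ((A ^ j) (NormedSpace.exp ((-t) • A) u0)))

set_option synthInstance.maxHeartbeats 1000000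

section Aux

variable {H : Type u} [NormedAddCommGroup H] [InnerProductSpace ℝ H] [CompleteSpace H]

private lemma expE_hasDerivAt (A : H →L[ℝ] H) (q : ℕ) (u : H) (t : ℝ) :
    HasDerivAt (fun t : ℝ => (A ^ q) (NormedSpace.exp ((-t) • A) u))
      (-((A ^ (q + 1)) (NormedSpace.exp ((-t) • A) u))) t := by
  have h1 : HasDerivAt (fun s : ℝ => NormedSpace.exp (s • A))
      (NormedSpace.exp ((-t) • A) * A) (-t) := hasDerivAt_exp_smul_const A (-t)
  have hneg : HasDerivAt (fun t : ℝ => -t) (-1 : ℝ) t := (hasDerivAt_id t).neg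
  have h2 : HasDerivAt (fun t : ℝ => NormedSpace.exp ((-t) • A))
      ((-1 : ℝ) • (NormedSpace.exp ((-t) • A) * A)) t := h1.scomp t hneg
  set L : (H →L[ℝ] H) →L[ℝ] H := (A ^ q).comp ((ContinuousLinearMap.apply ℝ H) u) with hL
  have h3 := L.hasFDerivAt.comp_hasDerivAt t h2
  have hfun : (⇑L ∘ fun t : ℝ => NormedSpace.exp ((-t) • A))
      = fun t : ℝ => (A ^ q) (NormedSpace.exp ((-t) • A) u) := by
    ext s; simp [hL]
  have hval : L ((-1 : ℝ) • (NormedSpace.exp ((-t) • A) * A))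
      = -((A ^ (q + 1)) (NormedSpace.exp ((-t) • A) u)) := by
    have hcomm : NormedSpace.exp ((-t) • A) * A = A * NormedSpace.exp ((-t) • A) :=
      (((Commute.refl A).smul_left (-t)).exp_left).eq
    simp only [hL, map_smul, ContinuousLinearMap.coe_comp', Function.comp_apply,
      ContinuousLinearMap.apply_apply, hcomm]
    simp [pow_succ, ContinuousLinearMap.mul_apply]
  rw [hfun, hval] at h3
  exact h3

/-- The generic sums appearing in derivatives of `vl0`. -/
noncomputable def Sfun (A : H →L[ℝ] H) (p : ℕ) (c : ℕ → ℝ) (n : ℕ) (u : H) (t : ℝ) : H :=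
  ∑ j ∈ Finset.range n,
    (c j * ((-t) ^ j / (Nat.factorial j : ℝ))) • ((A ^ (p + j)) (NormedSpace.exp ((-t) • A) u))

/-- Pascal-type operation on coefficient sequences. -/
def plsc (c : ℕ → ℝ) : ℕ → ℝ := fun j => c j + c (j + 1)

private lemma hasDerivAt_Sfun (A : H →L[ℝ] H) (p : ℕ) (c : ℕ → ℝ) (n : ℕ) (u : H) (t : ℝ)
    (hc : c (n + 1) = 0) :
    HasDerivAt (Sfun A p c (n + 1) u) (-(Sfun A (p + 1) (plsc c) (n + 1) u t)) t := by
  set X : ℝ → H := fun t => NormedSpace.exp ((-t) • A) u with hX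
  set f : ℕ → H := fun j => (c j * (((j : ℝ) * (-t) ^ (j - 1) * (-1)) / (Nat.factorial j : ℝ))) •
      ((A ^ (p + j)) (X t)) with hf
  set g : ℕ → H := fun j => (c j * ((-t) ^ j / (Nat.factorial j : ℝ))) •
      (-((A ^ (p + j + 1)) (X t))) with hg
  have hD : HasDerivAt (Sfun A p c (n + 1) u) (∑ j ∈ Finset.range (n + 1), (f j + g j)) t := by
    apply HasDerivAt.fun_sum
    intro j _
    have hcoef : HasDerivAt (fun t : ℝ => c j * ((-t) ^ j / (Nat.factorial j : ℝ)))
        (c j * (((j : ℝ) * (-t) ^ (j - 1) * (-1)) / (Nat.factorial j : ℝ))) t :=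
      (((hasDerivAt_id t).neg.pow j).div_const _).const_mul (c j)
    have h5 := hcoef.smul (expE_hasDerivAt A (p + j) u t)
    have hcm : g j + f j = f j + g j := add_comm _ _
    rw [← hcm]
    exact h5
  have hkey : ∑ j ∈ Finset.range (n + 1), (f j + g j) = -(Sfun A (p + 1) (plsc c) (n + 1) u t) := by
    have hfs : ∑ j ∈ Finset.range (n + 1), f j
        = ∑ j ∈ Finset.range (n + 1), (-(c (j + 1) * ((-t) ^ j / (Nat.factorial j : ℝ)))) •
            ((A ^ (p + 1 + j)) (X t)) := by
      rw [Finset.sum_range_succ' f n]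
      have hf0 : f 0 = 0 := by simp [hf]
      rw [hf0, add_zero]
      rw [Finset.sum_range_succ]
      have hlast : (-(c (n + 1) * ((-t) ^ n / (Nat.factorial n : ℝ)))) •
          ((A ^ (p + 1 + n)) (X t)) = 0 := by simp [hc]
      rw [hlast, add_zero]
      apply Finset.sum_congr rfl
      intro j _
      have hcc : c (j + 1) * (((j + 1 : ℕ) : ℝ) * (-t) ^ (j + 1 - 1) * (-1) /
          (Nat.factorial (j + 1) : ℝ)) = -(c (j + 1) * ((-t) ^ j / (Nat.factorial j : ℝ))) := by
        have hfac : ((Nat.factorial (j + 1) : ℝ)) = ((j : ℝ) + 1) * (Nat.factorial j : ℝ) := by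
          rw [Nat.factorial_succ]; push_cast; ring
        have hj : (Nat.factorial j : ℝ) ≠ 0 := Nat.cast_ne_zero.mpr (Nat.factorial_ne_zero j)
        have hj1 : ((j : ℝ) + 1) ≠ 0 := by positivity
        simp only [Nat.add_sub_cancel, hfac]
        push_cast
        field_simp
      have hexp : p + (j + 1) = p + 1 + j := by omega
      simp only [hf, hexp, hcc]
    have hgs : ∀ j, g j = (-(c j * ((-t) ^ j / (Nat.factorial j : ℝ)))) •
        ((A ^ (p + 1 + j)) (X t)) := by
      intro j
      have hexp : p + j + 1 = p + 1 + j := by omega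
      simp only [hg, hexp, smul_neg, neg_smul]
    rw [Finset.sum_add_distrib, hfs]
    simp only [hgs]
    rw [Sfun, ← Finset.sum_neg_distrib, ← Finset.sum_add_distrib]
    apply Finset.sum_congr rfl
    intro j _
    rw [← add_smul, ← neg_smul]
    congr 1
    simp [plsc]
    ring
  rw [hkey] at hD
  exact hD

private lemma iteratedDeriv_family (F : ℕ → ℝ → H)
    (h : ∀ k t, HasDerivAt (F k) (F (k + 1) t) t) (k : ℕ) :
    iteratedDeriv k (F 0) = F k := by
  induction k with
  | zero => simp [iteratedDeriv_zero]
  | succ k ih =>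
    rw [iteratedDeriv_succ, ih]
    funext t
    exact (h k t).deriv

private lemma plsc_iter_choose (m k : ℕ) :
    plsc^[k] (fun j => ((m.choose j : ℕ) : ℝ)) = fun j => (((m + k).choose (j + k) : ℕ) : ℝ) := by
  induction k with
  | zero => simp
  | succ k ih =>
    rw [Function.iterate_succ_apply', ih]
    funext j
    have h1 : m + (k + 1) = (m + k) + 1 := by omega
    have h2 : j + (k + 1) = (j + k) + 1 := by omega
    have h3 : j + 1 + k = (j + k) + 1 := by omega
    simp only [plsc, h1, h2, h3, Nat.choose_succ_succ]
    push_cast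
    ring

end Aux

/-- `(d/dt)^ℓ v_{ℓ,0}(t)` equals the explicit asymptotic profile `v_ℓ(t)`. -/
theorem stmt_13 {H : Type u} [NormedAddCommGroup H] [InnerProductSpace ℝ H] [CompleteSpace H]
    (A : H →L[ℝ] H) (hA : IsSelfAdjoint A) (hApos : ∀ x : H, 0 ≤ ⟪A x, x⟫)
    (u0 u1 : H) (ℓ : ℕ) (hℓ : 1 ≤ ℓ) (t : ℝ) (ht : 0 ≤ t) :
    iteratedDeriv ℓ (vl0 A u0 u1 ℓ) t =
      (∑ j ∈ Finset.range (ℓ + 1),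
          (((2 * ℓ).choose (ℓ + j) : ℝ) * ((-t) ^ j / (Nat.factorial j : ℝ))) •
            ((A ^ (ℓ + j)) (NormedSpace.exp ((-t) • A) (u0 + u1))))
        - ∑ k ∈ Finset.range ℓ,
            (((2 * ℓ - 1).choose (ℓ + k) : ℝ) * ((-t) ^ k / (Nat.factorial k : ℝ))) •
              ((A ^ (ℓ + k)) (NormedSpace.exp ((-t) • A) u0)) := by
  set c1 : ℕ → ℝ := fun j => ((ℓ.choose j : ℕ) : ℝ) with hc1
  set c2 : ℕ → ℝ := fun j => (((ℓ - 1).choose j : ℕ) : ℝ) with hc2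
  set F : ℕ → ℝ → H := fun k t => ((-1 : ℝ) ^ (ℓ + k)) •
      (Sfun A k (plsc^[k] c1) (ℓ + 1) (u0 + u1) t - Sfun A k (plsc^[k] c2) (ℓ + 1) u0 t) with hF
  -- vl0 = F 0
  have hF0 : vl0 A u0 u1 ℓ = F 0 := by
    funext s
    have hext : ∑ j ∈ Finset.range (ℓ + 1),
        (c2 j * ((-s) ^ j / (Nat.factorial j : ℝ))) • ((A ^ j) (NormedSpace.exp ((-s) • A) u0))
        = ∑ j ∈ Finset.range ℓ,
        (((ℓ - 1).choose j : ℝ) * ((-s) ^ j / (Nat.factorial j : ℝ))) •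
          ((A ^ j) (NormedSpace.exp ((-s) • A) u0)) := by
      rw [Finset.sum_range_succ]
      have : (ℓ - 1).choose ℓ = 0 := Nat.choose_eq_zero_of_lt (by omega)
      simp [hc2, this]
    simp only [hF, vl0, Sfun, Function.iterate_zero, id_eq, add_zero, Nat.zero_add, zero_add, hext, hc1]
  -- derivative recursion
  have hderiv : ∀ k t, HasDerivAt (F k) (F (k + 1) t) t := by
    intro k s
    have hz1 : plsc^[k] c1 (ℓ + 1) = 0 := by
      rw [hc1, plsc_iter_choose ℓ k]
      have : (ℓ + k).choose (ℓ + 1 + k) = 0 := Nat.choose_eq_zero_of_lt (by omega)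
      simp [this]
    have hz2 : plsc^[k] c2 (ℓ + 1) = 0 := by
      rw [hc2, plsc_iter_choose (ℓ - 1) k]
      have : (ℓ - 1 + k).choose (ℓ + 1 + k) = 0 := Nat.choose_eq_zero_of_lt (by omega)
      simp [this]
    have h1 := hasDerivAt_Sfun A k (plsc^[k] c1) ℓ (u0 + u1) s hz1
    have h2 := hasDerivAt_Sfun A k (plsc^[k] c2) ℓ u0 s hz2
    have h3 := (h1.sub h2).const_smul ((-1 : ℝ) ^ (ℓ + k))
    have hval : ((-1 : ℝ) ^ (ℓ + k)) •
        (-(Sfun A (k + 1) (plsc (plsc^[k] c1)) (ℓ + 1) (u0 + u1) s)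
          - -(Sfun A (k + 1) (plsc (plsc^[k] c2)) (ℓ + 1) u0 s)) = F (k + 1) s := by
      rw [hF]
      simp only [Function.iterate_succ_apply']
      rw [neg_sub_neg, ← neg_sub, smul_neg, ← neg_smul]
      congr 1
      rw [show ℓ + (k + 1) = (ℓ + k) + 1 by omega, pow_succ]
      ring
    rw [hval] at h3
    exact h3
  rw [hF0, iteratedDeriv_family F hderiv ℓ, hF]
  have heven : ((-1 : ℝ)) ^ (ℓ + ℓ) = 1 := Even.neg_one_pow ⟨ℓ, rfl⟩
  simp only [heven, one_smul]
  congr 1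
  · rw [hc1, plsc_iter_choose ℓ ℓ, Sfun]
    apply Finset.sum_congr rfl
    intro j _
    rw [show ℓ + ℓ = 2 * ℓ by omega, show j + ℓ = ℓ + j by omega]
  · rw [hc2, plsc_iter_choose (ℓ - 1) ℓ, Sfun, Finset.sum_range_succ]
    have : (ℓ - 1 + ℓ).choose (ℓ + ℓ) = 0 := Nat.choose_eq_zero_of_lt (by omega)
    rw [this]
    simp only [Nat.cast_zero, zero_mul, zero_smul, add_zero]
    apply Finset.sum_congr rfl
    intro j _
    rw [show ℓ - 1 + ℓ = 2 * ℓ - 1 by omega, show j + ℓ = ℓ + j by omega]
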